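/- Let N ≥ 1, let a : ℝ → ℝ be odd, b : ℝ → ℝ be even, σ ∈ ℝ, and let r(i) = N + 1 − i be the index reversal. Suppose (x, β) : I → ℝ^N × ℝ^N is differentiable, has pairwise distinct nodes, and satisfies the Gauss–Galerkin evolution equations with drift a, diffusion b and parameter σ. Define x̃_i(t) = −x_{r(i)}(t) and β̃_i(t) = β_{r(i)}(t). Then (x̃, β̃) also satisfies the Gauss–Galerkin evolution equations with the same a, b, σ. (Hence the Gauss–Galerkin flow is equivariant under spatial reflection, so symmetric approximants remain symmetric.) -/

import Mathlib

open Finset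

/-- `l'_{ii} = ∑_{k≠i} 1/(x_i − x_k)`, the derivative of the `i`-th Lagrange basis
polynomial at its own node. -/
noncomputable def lpDiag {N : ℕ} (x : Fin N → ℝ) (i : Fin N) : ℝ :=
  ∑ k ∈ Finset.univ.erase i, 1 / (x i - x k)

/-- `l'_{ij} = (∏_{k≠j}(x_j − x_k)) / ((x_j − x_i)·∏_{k≠i}(x_i − x_k))` for `j ≠ i`,
the derivative of the `i`-th Lagrange basis polynomial at the node `x_j`. -/
noncomputable def lpOff {N : ℕ} (x : Fin N → ℝ) (i j : Fin N) : ℝ :=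
  (∏ k ∈ Finset.univ.erase j, (x j - x k)) /
    ((x j - x i) * ∏ k ∈ Finset.univ.erase i, (x i - x k))

/-- `l''_{ii} = (∑_{k≠i} 1/(x_i − x_k))² − ∑_{k≠i} 1/(x_i − x_k)²`, the second derivative
of the `i`-th Lagrange basis polynomial at its own node. -/
noncomputable def lppDiag {N : ℕ} (x : Fin N → ℝ) (i : Fin N) : ℝ :=
  (∑ k ∈ Finset.univ.erase i, 1 / (x i - x k)) ^ 2 -
    ∑ k ∈ Finset.univ.erase i, 1 / (x i - x k) ^ 2

/-- Right-hand side of the Gauss–Galerkin node equation (the `x`-equation):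
`β_i A_i + σ²(2 β_i b(x_i)² l'_{ii} + ∑_{j≠i} β_j b(x_j)² (x_j − x_i)(l'_{ij})²)`,
where `A_i` is the drift value at node `i` (possibly configuration dependent). -/
noncomputable def ggDriftRHS {N : ℕ} (A : Fin N → ℝ) (b : ℝ → ℝ) (σ : ℝ)
    (x β : Fin N → ℝ) (i : Fin N) : ℝ :=
  β i * A i + σ ^ 2 * (2 * β i * (b (x i)) ^ 2 * lpDiag x i +
    ∑ j ∈ Finset.univ.erase i, β j * (b (x j)) ^ 2 * (x j - x i) * (lpOff x i j) ^ 2)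

/-- Right-hand side of the Gauss–Galerkin weight equation (the `β`-equation):
`2 β_i A_i l'_{ii} + σ²(β_i b(x_i)²((l'_{ii})² + l''_{ii}) + ∑_{j≠i} β_j b(x_j)²(l'_{ij})²)`. -/
noncomputable def ggWeightRHS {N : ℕ} (A : Fin N → ℝ) (b : ℝ → ℝ) (σ : ℝ)
    (x β : Fin N → ℝ) (i : Fin N) : ℝ :=
  2 * β i * A i * lpDiag x i +
    σ ^ 2 * (β i * (b (x i)) ^ 2 * ((lpDiag x i) ^ 2 + lppDiag x i) +
      ∑ j ∈ Finset.univ.erase i, β j * (b (x j)) ^ 2 * (lpOff x i j) ^ 2)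

/-- The stationary Gauss–Galerkin equations with node-dependent drift values `A_i`. -/
def StationaryGGWithDrift {N : ℕ} (A : Fin N → ℝ) (b : ℝ → ℝ) (σ : ℝ)
    (x β : Fin N → ℝ) : Prop :=
  ∀ i, 0 = ggDriftRHS A b σ x β i ∧ 0 = ggWeightRHS A b σ x β i

/-- The stationary Gauss–Galerkin equations with drift `a : ℝ → ℝ`,
diffusion `b : ℝ → ℝ` and parameter `σ`. -/
def StationaryGG {N : ℕ} (a b : ℝ → ℝ) (σ : ℝ) (x β : Fin N → ℝ) : Prop :=
  StationaryGGWithDrift (fun i => a (x i)) b σ x β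

/-- `(x, β, x', β')` solves the Gauss–Galerkin evolution equations on the set `I`:
the nodes stay pairwise distinct, `x'` and `β'` are the derivatives of `x` and `β`,
and for every `i` and `t ∈ I`:
`β_i ẋ_i = β_i a(x_i) + σ²(2β_i b(x_i)² l'_{ii} + ∑_{j≠i} β_j b(x_j)²(x_j − x_i)(l'_{ij})²)`
and
`β̇_i = 2β_i a(x_i) l'_{ii} + σ²(β_i b(x_i)²((l'_{ii})² + l''_{ii}) + ∑_{j≠i} β_j b(x_j)²(l'_{ij})²)`. -/
def SolvesGG {N : ℕ} (a b : ℝ → ℝ) (σ : ℝ) (I : Set ℝ)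
    (x β x' β' : ℝ → Fin N → ℝ) : Prop :=
  ∀ t ∈ I, (∀ i j : Fin N, i ≠ j → x t i ≠ x t j) ∧
    ∀ i, HasDerivAt (fun s => x s i) (x' t i) t ∧
      HasDerivAt (fun s => β s i) (β' t i) t ∧
      β t i * x' t i = ggDriftRHS (fun i => a (x t i)) b σ (x t) (β t) i ∧
      β' t i = ggWeightRHS (fun i => a (x t i)) b σ (x t) (β t) i


section AuxReflect

open Finset

private lemma sum_rev_erase {N : ℕ} (i : Fin N) (f : Fin N → ℝ) :
    ∑ k ∈ Finset.univ.erase i, f k.rev = ∑ k ∈ Finset.univ.erase i.rev, f k := by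
  refine Finset.sum_equiv ⟨Fin.rev, Fin.rev, Fin.rev_rev, Fin.rev_rev⟩ ?_ ?_
  · intro k; simp [Fin.rev_inj]
  · intro k _; rfl

private lemma prod_rev_erase {N : ℕ} (i : Fin N) (f : Fin N → ℝ) :
    ∏ k ∈ Finset.univ.erase i, f k.rev = ∏ k ∈ Finset.univ.erase i.rev, f k := by
  refine Finset.prod_equiv ⟨Fin.rev, Fin.rev, Fin.rev_rev, Fin.rev_rev⟩ ?_ ?_
  · intro k; simp [Fin.rev_inj]
  · intro k _; rfl

private lemma lpDiag_reflect {N : ℕ} (x : Fin N → ℝ) (i : Fin N) :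
    lpDiag (fun k => -x k.rev) i = - lpDiag x i.rev := by
  unfold lpDiag
  calc ∑ k ∈ Finset.univ.erase i, 1 / (-x i.rev - -x k.rev)
      = ∑ k ∈ Finset.univ.erase i, (fun m => -(1 / (x i.rev - x m))) k.rev := by
        refine Finset.sum_congr rfl fun k _ => ?_
        show 1 / (-x i.rev - -x k.rev) = -(1 / (x i.rev - x k.rev))
        have h1 : -x i.rev - -x k.rev = -(x i.rev - x k.rev) := by ring
        rw [h1, div_neg]
    _ = ∑ k ∈ Finset.univ.erase i.rev, -(1 / (x i.rev - x k)) :=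
        sum_rev_erase i (fun m => -(1 / (x i.rev - x m)))
    _ = - ∑ k ∈ Finset.univ.erase i.rev, 1 / (x i.rev - x k) := by
        rw [Finset.sum_neg_distrib]

private lemma prod_reflect {N : ℕ} (x : Fin N → ℝ) (m : Fin N) :
    ∏ k ∈ Finset.univ.erase m, (-x m.rev - -x k.rev)
      = (-1 : ℝ) ^ (Finset.univ.erase m).card *
        ∏ k ∈ Finset.univ.erase m.rev, (x m.rev - x k) := by
  calc ∏ k ∈ Finset.univ.erase m, (-x m.rev - -x k.rev)
      = ∏ k ∈ Finset.univ.erase m, (-1 : ℝ) * (x m.rev - x k.rev) := by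
        refine Finset.prod_congr rfl fun k _ => by ring
    _ = ((-1 : ℝ) ^ (Finset.univ.erase m).card) *
          ∏ k ∈ Finset.univ.erase m, (x m.rev - x k.rev) := by
        rw [Finset.prod_mul_distrib, Finset.prod_const]
    _ = _ := by rw [prod_rev_erase m (fun k => x m.rev - x k)]

private lemma card_erase_univ {N : ℕ} (i : Fin N) :
    (Finset.univ.erase i).card = N - 1 := by
  rw [Finset.card_erase_of_mem (Finset.mem_univ i)]
  simp

private lemma lpOff_reflect {N : ℕ} (x : Fin N → ℝ) (i j : Fin N) :
    lpOff (fun k => -x k.rev) i j = - lpOff x i.rev j.rev := by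
  unfold lpOff
  rw [prod_reflect x j, prod_reflect x i, card_erase_univ, card_erase_univ]
  set c : ℝ := (-1 : ℝ) ^ (N - 1) with hc
  have hcne : c ≠ 0 := by
    rw [hc]; exact pow_ne_zero _ (by norm_num)
  set P : ℝ := ∏ k ∈ Finset.univ.erase j.rev, (x j.rev - x k)
  set Q : ℝ := ∏ k ∈ Finset.univ.erase i.rev, (x i.rev - x k)
  have hd : -x j.rev - -x i.rev = -(x j.rev - x i.rev) := by ring
  rw [hd]
  have h1 : -(x j.rev - x i.rev) * (c * Q) = -(c * ((x j.rev - x i.rev) * Q)) := by ring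
  rw [h1, div_neg, mul_div_mul_left P ((x j.rev - x i.rev) * Q) hcne]

private lemma lppDiag_reflect {N : ℕ} (x : Fin N → ℝ) (i : Fin N) :
    lppDiag (fun k => -x k.rev) i = lppDiag x i.rev := by
  have h1 : (∑ k ∈ Finset.univ.erase i, 1 / (-x i.rev - -x k.rev))
      = - lpDiag x i.rev := lpDiag_reflect x i
  unfold lppDiag
  rw [h1, neg_pow, ]
  have h2 : ∑ k ∈ Finset.univ.erase i, 1 / (-x i.rev - -x k.rev) ^ 2
      = ∑ k ∈ Finset.univ.erase i.rev, 1 / (x i.rev - x k) ^ 2 := by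
    calc ∑ k ∈ Finset.univ.erase i, 1 / (-x i.rev - -x k.rev) ^ 2
        = ∑ k ∈ Finset.univ.erase i, (fun m => 1 / (x i.rev - x m) ^ 2) k.rev := by
          refine Finset.sum_congr rfl fun k _ => ?_
          show 1 / (-x i.rev - -x k.rev) ^ 2 = 1 / (x i.rev - x k.rev) ^ 2
          have h3 : -x i.rev - -x k.rev = -(x i.rev - x k.rev) := by ring
          rw [h3, neg_sq]
      _ = _ := sum_rev_erase i (fun m => 1 / (x i.rev - x m) ^ 2)
  rw [h2]
  unfold lpDiag
  ring

private lemma ggDriftRHS_reflect {N : ℕ} (a b : ℝ → ℝ)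
    (ha : ∀ y : ℝ, a (-y) = -a y) (hb : ∀ y : ℝ, b (-y) = b y) (σ : ℝ)
    (x β : Fin N → ℝ) (i : Fin N) :
    ggDriftRHS (fun k => a (-x k.rev)) b σ (fun k => -x k.rev) (fun k => β k.rev) i
      = - ggDriftRHS (fun k => a (x k)) b σ x β i.rev := by
  unfold ggDriftRHS
  beta_reduce
  rw [lpDiag_reflect, ha, hb]
  have hsum : ∑ j ∈ Finset.univ.erase i,
      β j.rev * b (-x j.rev) ^ 2 * (-x j.rev - -x i.rev) *
        lpOff (fun k => -x k.rev) i j ^ 2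
      = - ∑ j ∈ Finset.univ.erase i.rev,
          β j * b (x j) ^ 2 * (x j - x i.rev) * lpOff x i.rev j ^ 2 := by
    calc ∑ j ∈ Finset.univ.erase i,
        β j.rev * b (-x j.rev) ^ 2 * (-x j.rev - -x i.rev) *
          lpOff (fun k => -x k.rev) i j ^ 2
        = ∑ j ∈ Finset.univ.erase i,
            (fun m => -(β m * b (x m) ^ 2 * (x m - x i.rev) * lpOff x i.rev m ^ 2)) j.rev := by
          refine Finset.sum_congr rfl fun j _ => ?_
          rw [lpOff_reflect, hb]
          have h1 : -x j.rev - -x i.rev = -(x j.rev - x i.rev) := by ring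
          rw [h1, neg_pow]
          ring
      _ = ∑ j ∈ Finset.univ.erase i.rev,
            -(β j * b (x j) ^ 2 * (x j - x i.rev) * lpOff x i.rev j ^ 2) :=
          sum_rev_erase i
            (fun m => -(β m * b (x m) ^ 2 * (x m - x i.rev) * lpOff x i.rev m ^ 2))
      _ = _ := Finset.sum_neg_distrib _
  rw [hsum]
  ring

private lemma ggWeightRHS_reflect {N : ℕ} (a b : ℝ → ℝ)
    (ha : ∀ y : ℝ, a (-y) = -a y) (hb : ∀ y : ℝ, b (-y) = b y) (σ : ℝ)
    (x β : Fin N → ℝ) (i : Fin N) :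
    ggWeightRHS (fun k => a (-x k.rev)) b σ (fun k => -x k.rev) (fun k => β k.rev) i
      = ggWeightRHS (fun k => a (x k)) b σ x β i.rev := by
  unfold ggWeightRHS
  beta_reduce
  rw [lpDiag_reflect, lppDiag_reflect, ha, hb]
  have hsum : ∑ j ∈ Finset.univ.erase i,
      β j.rev * b (-x j.rev) ^ 2 * lpOff (fun k => -x k.rev) i j ^ 2
      = ∑ j ∈ Finset.univ.erase i.rev,
          β j * b (x j) ^ 2 * lpOff x i.rev j ^ 2 := by
    calc ∑ j ∈ Finset.univ.erase i,
        β j.rev * b (-x j.rev) ^ 2 * lpOff (fun k => -x k.rev) i j ^ 2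
        = ∑ j ∈ Finset.univ.erase i,
            (fun m => β m * b (x m) ^ 2 * lpOff x i.rev m ^ 2) j.rev := by
          refine Finset.sum_congr rfl fun j _ => ?_
          rw [lpOff_reflect, hb, neg_pow]
          ring
      _ = _ := sum_rev_erase i (fun m => β m * b (x m) ^ 2 * lpOff x i.rev m ^ 2)
  rw [hsum]
  ring

end AuxReflect

/-- **Reflection equivariance (parity) of the Gauss–Galerkin flow.**
If the drift `a` is odd and the diffusion `b` is even, and `(x, β)` solves the
Gauss–Galerkin evolution equations, then the reflected configuration
`x̃_i(t) = −x_{r(i)}(t)`, `β̃_i(t) = β_{r(i)}(t)` (with `r` the index reversal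
`i ↦ N + 1 − i`, i.e. `Fin.rev`) also solves them. Hence symmetric approximants
remain symmetric. -/
theorem gg_reflection_equivariant {N : ℕ} (hN : 1 ≤ N) (a b : ℝ → ℝ)
    (ha : ∀ y : ℝ, a (-y) = -a y) (hb : ∀ y : ℝ, b (-y) = b y) (σ : ℝ)
    (I : Set ℝ) (x β x' β' : ℝ → Fin N → ℝ)
    (h : SolvesGG a b σ I x β x' β') :
    SolvesGG a b σ I
      (fun t i => -x t i.rev) (fun t i => β t i.rev)
      (fun t i => -x' t i.rev) (fun t i => β' t i.rev) := by
  intro t ht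
  obtain ⟨hdist, hi⟩ := h t ht
  refine ⟨fun i j hij => ?_, fun i => ?_⟩
  · simp only [ne_eq, neg_inj]
    exact hdist i.rev j.rev fun hh => hij (Fin.rev_inj.mp hh)
  · obtain ⟨hx, hβ, hd, hw⟩ := hi i.rev
    refine ⟨hx.neg, hβ, ?_, ?_⟩
    · have := ggDriftRHS_reflect a b ha hb σ (x t) (β t) i
      simp only at this ⊢
      rw [this, mul_neg, hd]
    · have := ggWeightRHS_reflect a b ha hb σ (x t) (β t) i
      simp only at this ⊢
      rw [this, hw]
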